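/- arXiv:2212.10110 — 2 statements merged into one kernel-verified Lean document; each statement's English description precedes it below -/
import Mathlib

section
/- Let (X, d_X) be a quasi cone metric space over (E, P) and (Y, d_Y) a quasi cone metric space over (E', P') in which forward convergence is equivalent to backward convergence. If {f_n} is a sequence of forward (cAC)-continuous functions from X to Y that forward converges uniformly to a function f : X → Y, then f is forward (cAC)-continuous. -/
open Pointwise

/-- A cone in a real Banach space `E`: nonempty, closed, not `{0}`, closed under
nonnegative combinations, and `P ∩ (-P) = {0}`. -/
def IsCone {E : Type*} [NormedAddCommGroup E] [NormedSpace ℝ E] (P : Set E) : Prop :=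
  P.Nonempty ∧ IsClosed P ∧ P ≠ {0} ∧
    (∀ x ∈ P, ∀ y ∈ P, ∀ s t : ℝ, 0 ≤ s → 0 ≤ t → s • x + t • y ∈ P) ∧
    P ∩ (-P) = {0}

/-- `a ≤ b` with respect to the cone `P`, i.e. `b - a ∈ P`. -/
def coneLE {E : Type*} [NormedAddCommGroup E] (P : Set E) (a b : E) : Prop :=
  b - a ∈ P

/-- `a ≪ b` with respect to the cone `P`, i.e. `b - a ∈ interior P`. -/
def coneLT {E : Type*} [NormedAddCommGroup E] (P : Set E) (a b : E) : Prop :=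
  b - a ∈ interior P

/-- `(X, d)` is a quasi cone metric space over `(E, P)`. -/
def IsQuasiConeMetric {E X : Type*} [NormedAddCommGroup E]
    (P : Set E) (d : X → X → E) : Prop :=
  (∀ x y : X, coneLE P 0 (d x y)) ∧
  (∀ x y : X, d x y = 0 ↔ x = y) ∧
  (∀ x y z : X, coneLE P (d x y) (d x z + d z y))

/-- A sequence (indexed by positive integers) is forward arithmetic convergent. -/
def ForwardArithConv {E X : Type*} [NormedAddCommGroup E]
    (P : Set E) (d : X → X → E) (x : ℕ+ → X) : Prop :=
  ∀ u : E, coneLT P 0 u → ∃ N : ℕ+, ∀ n m : ℕ+,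
    N ≤ PNat.gcd n m → coneLT P (d (x (PNat.gcd n m)) (x n)) u

/-- A sequence (indexed by positive integers) is backward arithmetic convergent. -/
def BackwardArithConv {E X : Type*} [NormedAddCommGroup E]
    (P : Set E) (d : X → X → E) (x : ℕ+ → X) : Prop :=
  ∀ u : E, coneLT P 0 u → ∃ N : ℕ+, ∀ n m : ℕ+,
    N ≤ PNat.gcd n m → coneLT P (d (x n) (x (PNat.gcd n m))) u

/-- A sequence forward converges to `x₀`. -/
def ForwardConvTo {E X : Type*} [NormedAddCommGroup E]
    (P : Set E) (d : X → X → E) (x : ℕ+ → X) (x₀ : X) : Prop :=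
  ∀ u : E, coneLT P 0 u → ∃ N : ℕ+, ∀ n : ℕ+, N ≤ n → coneLT P (d x₀ (x n)) u

/-- A sequence backward converges to `x₀`. -/
def BackwardConvTo {E X : Type*} [NormedAddCommGroup E]
    (P : Set E) (d : X → X → E) (x : ℕ+ → X) (x₀ : X) : Prop :=
  ∀ u : E, coneLT P 0 u → ∃ N : ℕ+, ∀ n : ℕ+, N ≤ n → coneLT P (d (x n) x₀) u

/-- Forward convergence is equivalent to backward convergence in `(X, d)`. -/
def FwdEqBwdConv {E X : Type*} [NormedAddCommGroup E]
    (P : Set E) (d : X → X → E) : Prop :=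
  ∀ (x : ℕ+ → X) (x₀ : X), ForwardConvTo P d x x₀ ↔ BackwardConvTo P d x x₀

/-- `f : X → Y` is arithmetic ff-continuous. -/
def ArithFFContinuous {E E' X Y : Type*} [NormedAddCommGroup E] [NormedAddCommGroup E']
    (P : Set E) (P' : Set E') (dX : X → X → E) (dY : Y → Y → E') (f : X → Y) : Prop :=
  ∀ x : ℕ+ → X, ForwardArithConv P dX x → ForwardArithConv P' dY (fun n => f (x n))

/-- `f : X → Y` is arithmetic fb-continuous. -/
def ArithFBContinuous {E E' X Y : Type*} [NormedAddCommGroup E] [NormedAddCommGroup E']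
    (P : Set E) (P' : Set E') (dX : X → X → E) (dY : Y → Y → E') (f : X → Y) : Prop :=
  ∀ x : ℕ+ → X, ForwardArithConv P dX x → BackwardArithConv P' dY (fun n => f (x n))

/-- `f : X → Y` is uniformly continuous between quasi cone metric spaces. -/
def QCMUniformlyContinuous {E E' X Y : Type*} [NormedAddCommGroup E] [NormedAddCommGroup E']
    (P : Set E) (P' : Set E') (dX : X → X → E) (dY : Y → Y → E') (f : X → Y) : Prop :=
  ∀ u' : E', coneLT P' 0 u' → ∃ u : E, coneLT P 0 u ∧
    ∀ x y : X, coneLT P (dX x y) u → coneLT P' (dY (f x) (f y)) u'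

/-- A sequence of functions `fₙ : X → Y` is forward arithmetic convergent. -/
def FwdArithConvFunSeq {E' X Y : Type*} [NormedAddCommGroup E']
    (P' : Set E') (dY : Y → Y → E') (fn : ℕ+ → X → Y) : Prop :=
  ∀ u' : E', coneLT P' 0 u' → ∃ n₀ : ℕ+, ∀ (x : X) (n m : ℕ+),
    n₀ ≤ PNat.gcd n m → coneLT P' (dY (fn (PNat.gcd n m) x) (fn n x)) u'

/-- A sequence of functions `fₙ : X → Y` is backward arithmetic convergent. -/
def BwdArithConvFunSeq {E' X Y : Type*} [NormedAddCommGroup E']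
    (P' : Set E') (dY : Y → Y → E') (fn : ℕ+ → X → Y) : Prop :=
  ∀ u' : E', coneLT P' 0 u' → ∃ n₀ : ℕ+, ∀ (x : X) (n m : ℕ+),
    n₀ ≤ PNat.gcd n m → coneLT P' (dY (fn n x) (fn (PNat.gcd n m) x)) u'

/-- `fₙ` forward converges uniformly to `f`. -/
def UnifFwdConv {E' X Y : Type*} [NormedAddCommGroup E']
    (P' : Set E') (dY : Y → Y → E') (fn : ℕ+ → X → Y) (f : X → Y) : Prop :=
  ∀ u' : E', coneLT P' 0 u' → ∃ N : ℕ+, ∀ n : ℕ+, N ≤ n → ∀ x : X,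
    coneLT P' (dY (f x) (fn n x)) u'

/-- `f : X → Y` is forward (cAC)-continuous. -/
def ForwardCACContinuous {E E' X Y : Type*} [NormedAddCommGroup E] [NormedAddCommGroup E']
    (P : Set E) (P' : Set E') (dX : X → X → E) (dY : Y → Y → E') (f : X → Y) : Prop :=
  ∀ (x : ℕ+ → X) (x₀ : X), ForwardConvTo P dX x x₀ →
    ForwardArithConv P' dY (fun n => f (x n))

/-- `B` is forward arithmetic compact. -/
def ForwardArithCompact {E X : Type*} [NormedAddCommGroup E]
    (P : Set E) (d : X → X → E) (B : Set X) : Prop :=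
  ∀ x : ℕ+ → X, (∀ n, x n ∈ B) → ∃ φ : ℕ+ → ℕ+, StrictMono φ ∧
    ForwardArithConv P d (fun n => x (φ n))

/-- `B` is backward arithmetic compact. -/
def BackwardArithCompact {E X : Type*} [NormedAddCommGroup E]
    (P : Set E) (d : X → X → E) (B : Set X) : Prop :=
  ∀ x : ℕ+ → X, (∀ n, x n ∈ B) → ∃ φ : ℕ+ → ℕ+, StrictMono φ ∧
    BackwardArithConv P d (fun n => x (φ n))


lemma isCone_add_mem {E : Type*} [NormedAddCommGroup E] [NormedSpace ℝ E] {P : Set E}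
    (hP : IsCone P) {a b : E} (ha : a ∈ P) (hb : b ∈ P) : a + b ∈ P := by
  simpa using hP.2.2.2.1 a ha b hb 1 1 zero_le_one zero_le_one

lemma isCone_smul_mem {E : Type*} [NormedAddCommGroup E] [NormedSpace ℝ E] {P : Set E}
    (hP : IsCone P) {a : E} {t : ℝ} (ht : 0 ≤ t) (ha : a ∈ P) : t • a ∈ P := by
  simpa using hP.2.2.2.1 a ha a ha t 0 ht le_rfl

lemma isCone_interior_add {E : Type*} [NormedAddCommGroup E] [NormedSpace ℝ E] {P : Set E}
    (hP : IsCone P) {a b : E} (ha : a ∈ interior P) (hb : b ∈ P) : a + b ∈ interior P := by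
  rw [mem_interior] at ha ⊢
  obtain ⟨U, hUP, hUo, haU⟩ := ha
  refine ⟨(· + b) '' U, ?_, (isOpenMap_add_right b) U hUo, ⟨a, haU, rfl⟩⟩
  rintro _ ⟨u, hu, rfl⟩
  exact isCone_add_mem hP (hUP hu) hb

lemma isCone_interior_smul {E : Type*} [NormedAddCommGroup E] [NormedSpace ℝ E] {P : Set E}
    (hP : IsCone P) {a : E} {t : ℝ} (ht : 0 < t) (ha : a ∈ interior P) :
    t • a ∈ interior P := by
  rw [mem_interior] at ha ⊢
  obtain ⟨U, hUP, hUo, haU⟩ := ha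
  refine ⟨(t • ·) '' U, ?_, isOpenMap_smul₀ ht.ne' U hUo, ⟨a, haU, rfl⟩⟩
  rintro _ ⟨u, hu, rfl⟩
  exact isCone_smul_mem hP ht.le (hUP hu)

lemma coneLT_triangle' {E : Type*} [NormedAddCommGroup E] [NormedSpace ℝ E] {P : Set E}
    (hP : IsCone P) {a b c u v : E} (h : coneLE P a (b + c))
    (hb : coneLT P b u) (hc : coneLT P c v) : coneLT P a (u + v) := by
  have key : u + v - a = (u - b) + ((v - c) + (b + c - a)) := by abel
  show u + v - a ∈ interior P
  rw [key]
  exact isCone_interior_add hP hb (isCone_add_mem hP (interior_subset hc) h)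

theorem unifFwdLimit_forwardCACContinuous {E E' X Y : Type*}
    [NormedAddCommGroup E] [NormedSpace ℝ E] [CompleteSpace E]
    [NormedAddCommGroup E'] [NormedSpace ℝ E'] [CompleteSpace E']
    (P : Set E) (P' : Set E')
    (hP : IsCone P) (hP' : IsCone P')
    (hPint : (interior P).Nonempty) (hP'int : (interior P').Nonempty)
    (dX : X → X → E) (dY : Y → Y → E')
    (hdX : IsQuasiConeMetric P dX) (hdY : IsQuasiConeMetric P' dY)
    (hYfb : FwdEqBwdConv P' dY)
    (fn : ℕ+ → X → Y) (hfn : ∀ n : ℕ+, ForwardCACContinuous P P' dX dY (fn n))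
    (f : X → Y) (hconv : UnifFwdConv P' dY fn f) :
    ForwardCACContinuous P P' dX dY f := by
  intro x x₀ hx
  set y := f x₀ with hy
  -- Step 1: (fn k x₀) forward converges to y, hence backward converges.
  have hb_fwd : ForwardConvTo P' dY (fun k => fn k x₀) y := by
    intro u hu
    obtain ⟨N, hN⟩ := hconv u hu
    exact ⟨N, fun n hn => hN n hn x₀⟩
  have hb_bwd : BackwardConvTo P' dY (fun k => fn k x₀) y := (hYfb _ _).mp hb_fwd
  -- the interleaved sequence z : x₀ at even slots, x_((j+1)/2) at odd slots
  have hpos : ∀ j : ℕ+, 0 < ((j : ℕ) + 1) / 2 := fun j => by have := j.pos; omega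
  set z : ℕ+ → X :=
    fun j => if (j : ℕ) % 2 = 0 then x₀ else x ⟨((j : ℕ) + 1) / 2, hpos j⟩ with hzdef
  have hzconv : ForwardConvTo P dX z x₀ := by
    intro u hu
    obtain ⟨N, hN⟩ := hx u hu
    refine ⟨2 * N, fun j hj => ?_⟩
    by_cases hj2 : (j : ℕ) % 2 = 0
    · have hz : z j = x₀ := by simp [hzdef, hj2]
      rw [hz, (hdX.2.1 x₀ x₀).mpr rfl]
      exact hu
    · have hz : z j = x ⟨((j : ℕ) + 1) / 2, hpos j⟩ := by simp [hzdef, hj2]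
      rw [hz]
      apply hN
      have hjN : (2 * N : ℕ+) ≤ j := hj
      have h1 : ((2 * N : ℕ+) : ℕ) ≤ (j : ℕ) := (PNat.coe_le_coe _ _).mpr hjN
      have h2 : ((2 * N : ℕ+) : ℕ) = 2 * (N : ℕ) := by simp
      refine (PNat.coe_le_coe _ _).mp ?_
      change (N : ℕ) ≤ ((j : ℕ) + 1) / 2
      omega
  -- Step 2: for each fixed k, d(fn k (x n), fn k x₀) gets small
  have step2 : ∀ (k : ℕ+) (u : E'), coneLT P' 0 u →
      ∃ N : ℕ+, ∀ n : ℕ+, N ≤ n → coneLT P' (dY (fn k (x n)) (fn k x₀)) u := by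
    intro k u hu
    obtain ⟨M, hM⟩ := hfn k z x₀ hzconv u hu
    refine ⟨M, fun n hn => ?_⟩
    have hgpos : 0 < 2 * (n : ℕ) - 1 := by have := n.pos; omega
    set g : ℕ+ := ⟨2 * (n : ℕ) - 1, hgpos⟩ with hgdef
    have hgcd : PNat.gcd (2 * g) g = g := by
      apply PNat.coe_injective
      simp only [PNat.gcd_coe, PNat.mul_coe]
      exact Nat.gcd_eq_right (dvd_mul_left _ _)
    have hng : n ≤ g := by
      rw [← PNat.coe_le_coe]
      have := n.pos
      simp only [hgdef, PNat.mk_coe]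
      omega
    have hMg : M ≤ PNat.gcd (2 * g) g := by rw [hgcd]; exact hn.trans hng
    have := hM (2 * g) g hMg
    rw [hgcd] at this
    have hzg : z g = x n := by
      have hodd : ((g : ℕ)) % 2 ≠ 0 := by
        have := n.pos
        simp only [hgdef, PNat.mk_coe]
        omega
      have hz : z g = x ⟨((g : ℕ) + 1) / 2, hpos g⟩ := by simp [hzdef, hodd]
      rw [hz]
      congr 1
      apply PNat.coe_injective
      have := n.pos
      simp only [hgdef, PNat.mk_coe]
      omega
    have hzg2 : z (2 * g) = x₀ := by
      have heven : (((2 * g : ℕ+) : ℕ)) % 2 = 0 := by simp [PNat.mul_coe]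
      simp [hzdef, heven]
    simpa only [hzg, hzg2] using this
  -- Step 3: (f (x n)) backward converges to y
  have hbwd : BackwardConvTo P' dY (fun n => f (x n)) y := by
    intro u hu
    have huint : u ∈ interior P' := by simpa [coneLT] using hu
    have hv : coneLT P' 0 ((1/3 : ℝ) • u) := by
      show (1/3 : ℝ) • u - 0 ∈ interior P'
      rw [sub_zero]
      exact isCone_interior_smul hP' (by norm_num) huint
    obtain ⟨K₁, hK₁⟩ := hb_bwd _ hv
    obtain ⟨K₂, hK₂⟩ := hconv _ hv
    obtain ⟨N, hN⟩ := step2 (K₁ ⊔ K₂) _ hv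
    refine ⟨N, fun n hn => ?_⟩
    have t1 : coneLT P' (dY (f (x n)) (fn (K₁ ⊔ K₂) (x n))) ((1/3 : ℝ) • u) :=
      hK₂ _ le_sup_right (x n)
    have t2 := hN n hn
    have t3 : coneLT P' (dY (fn (K₁ ⊔ K₂) x₀) y) ((1/3 : ℝ) • u) := hK₁ _ le_sup_left
    have tri1 : coneLE P' (dY (fn (K₁ ⊔ K₂) (x n)) y)
        (dY (fn (K₁ ⊔ K₂) (x n)) (fn (K₁ ⊔ K₂) x₀) + dY (fn (K₁ ⊔ K₂) x₀) y) :=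
      hdY.2.2 _ _ _
    have s1 := coneLT_triangle' hP' tri1 t2 t3
    have tri2 : coneLE P' (dY (f (x n)) y)
        (dY (f (x n)) (fn (K₁ ⊔ K₂) (x n)) + dY (fn (K₁ ⊔ K₂) (x n)) y) := hdY.2.2 _ _ _
    have s2 := coneLT_triangle' hP' tri2 t1 s1
    have hsum : (1/3 : ℝ) • u + ((1/3 : ℝ) • u + (1/3 : ℝ) • u) = u := by module
    rwa [hsum] at s2
  -- Step 4: by hYfb, (f (x n)) also forward converges to y
  have hfwd : ForwardConvTo P' dY (fun n => f (x n)) y := (hYfb _ _).mpr hbwd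
  -- Step 5: conclude forward arithmetic convergence
  intro u hu
  have huint : u ∈ interior P' := by simpa [coneLT] using hu
  have hv : coneLT P' 0 ((1/2 : ℝ) • u) := by
    show (1/2 : ℝ) • u - 0 ∈ interior P'
    rw [sub_zero]
    exact isCone_interior_smul hP' (by norm_num) huint
  obtain ⟨N₁, h₁⟩ := hbwd _ hv
  obtain ⟨N₂, h₂⟩ := hfwd _ hv
  refine ⟨N₁ ⊔ N₂, fun n m hg => ?_⟩
  have hgn : PNat.gcd n m ≤ n := PNat.le_of_dvd (PNat.gcd_dvd_left n m)
  have t1 := h₁ (PNat.gcd n m) (le_trans le_sup_left hg)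
  have t2 := h₂ n (le_trans le_sup_right (hg.trans hgn))
  have tri : coneLE P' (dY (f (x (PNat.gcd n m))) (f (x n)))
      (dY (f (x (PNat.gcd n m))) y + dY y (f (x n))) := hdY.2.2 _ _ _
  have s := coneLT_triangle' hP' tri t1 t2
  have hsum : (1/2 : ℝ) • u + (1/2 : ℝ) • u = u := by module
  rwa [hsum] at s
end

section
/- Let (X, d_X) be a quasi cone metric space over (E, P) and (Y, d_Y) a quasi cone metric space over (E', P') in which forward convergence is equivalent to backward convergence. Then the set of all forward (cAC)-continuous functions from X to Y is closed under uniform forward limits: if f : X → Y is such that there exists a sequence {f_n} of forward (cAC)-continuous functions from X to Y that forward converges uniformly to f, then f is forward (cAC)-continuous. -/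
open Pointwise

section ConeAux

variable {E : Type*} [NormedAddCommGroup E] [NormedSpace ℝ E] {P : Set E}

lemma cone_zero_mem (hP : IsCone P) : (0:E) ∈ P := by
  obtain ⟨⟨p, hp⟩, -, -, hadd, -⟩ := hP
  simpa using hadd p hp p hp 0 0 le_rfl le_rfl

lemma cone_add_mem (hP : IsCone P) {a b : E} (ha : a ∈ P) (hb : b ∈ P) :
    a + b ∈ P := by
  obtain ⟨-, -, -, hadd, -⟩ := hP
  simpa using hadd a ha b hb 1 1 zero_le_one zero_le_one

lemma cone_smul_mem (hP : IsCone P) {a : E} (ha : a ∈ P) {t : ℝ} (ht : 0 ≤ t) :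
    t • a ∈ P := by
  obtain ⟨-, -, -, hadd, -⟩ := hP
  simpa using hadd a ha a ha t 0 ht le_rfl

lemma interior_add_cone (hP : IsCone P) {a b : E}
    (ha : a ∈ interior P) (hb : b ∈ P) : a + b ∈ interior P := by
  have hsub : (fun y => y + b) '' interior P ⊆ P := by
    rintro _ ⟨y, hy, rfl⟩
    exact cone_add_mem hP (interior_subset hy) hb
  have hopen : IsOpen ((fun y => y + b) '' interior P) :=
    (isOpenMap_add_right b) _ isOpen_interior
  exact interior_maximal hsub hopen ⟨a, ha, rfl⟩

lemma interior_smul_cone (hP : IsCone P) {a : E}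
    (ha : a ∈ interior P) {t : ℝ} (ht : 0 < t) : t • a ∈ interior P := by
  have hsub : (fun y => t • y) '' interior P ⊆ P := by
    rintro _ ⟨y, hy, rfl⟩
    exact cone_smul_mem hP (interior_subset hy) ht.le
  have hopen : IsOpen ((fun y => t • y) '' interior P) :=
    (isOpenMap_smul₀ (ne_of_gt ht)) _ isOpen_interior
  exact interior_maximal hsub hopen ⟨a, ha, rfl⟩

lemma cone_comb (hP : IsCone P) {a b c u v w : E}
    (ht : a + b - c ∈ P) (ha : u - a ∈ interior P) (hb : v - b ∈ interior P)
    (hw : w - (u + v) ∈ P) : w - c ∈ interior P := by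
  have h1 : (v - b) + ((a + b - c) + (w - (u + v))) ∈ interior P :=
    interior_add_cone hP hb (cone_add_mem hP ht hw)
  have h2 : (u - a) + ((v - b) + ((a + b - c) + (w - (u + v)))) ∈ interior P :=
    interior_add_cone hP ha (interior_subset h1)
  have heq : w - c = (u - a) + ((v - b) + ((a + b - c) + (w - (u + v)))) := by abel
  rwa [heq]

lemma cone_mono (hP : IsCone P) {a u v : E}
    (huv : u - v ∈ P) (h : v - a ∈ interior P) : u - a ∈ interior P := by
  have h2 := interior_add_cone hP h huv
  rwa [show v - a + (u - v) = u - a by abel] at h2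

lemma exists_small_index {e u : E} (he : e ∈ interior P) (hu : u ∈ interior P) :
    ∃ i : ℕ, u - (((i:ℝ)+1)⁻¹ • e + ((i:ℝ)+1)⁻¹ • e) ∈ interior P := by
  obtain ⟨ε, hε, hball⟩ := Metric.isOpen_iff.mp isOpen_interior u hu
  obtain ⟨i, hi⟩ := exists_nat_gt (2 * ‖e‖ / ε)
  refine ⟨i, hball ?_⟩
  rw [Metric.mem_ball, dist_eq_norm]
  have hpos : (0:ℝ) < (i:ℝ) + 1 := by positivity
  have heq : u - (((i:ℝ)+1)⁻¹ • e + ((i:ℝ)+1)⁻¹ • e) - u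
      = -((2 * ((i:ℝ)+1)⁻¹) • e) := by module
  rw [heq, norm_neg, norm_smul, Real.norm_eq_abs, abs_of_pos (by positivity)]
  rw [div_lt_iff₀ hε] at hi
  have h2 : 2 * ‖e‖ < ((i:ℝ)+1) * ε := by nlinarith [norm_nonneg e]
  calc 2 * ((i:ℝ)+1)⁻¹ * ‖e‖ = (2 * ‖e‖) / ((i:ℝ)+1) := by ring
    _ < ε := by rw [div_lt_iff₀ hpos]; nlinarith

end ConeAux

lemma pnat_le_add_one (a : ℕ+) : a ≤ a + 1 := by
  rw [← PNat.coe_le_coe]; push_cast; omega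


theorem cAC_closed_under_unifFwdLimits {E E' X Y : Type*}
    [NormedAddCommGroup E] [NormedSpace ℝ E] [CompleteSpace E]
    [NormedAddCommGroup E'] [NormedSpace ℝ E'] [CompleteSpace E']
    (P : Set E) (P' : Set E')
    (hP : IsCone P) (hP' : IsCone P')
    (hPint : (interior P).Nonempty) (hP'int : (interior P').Nonempty)
    (dX : X → X → E) (dY : Y → Y → E')
    (hdX : IsQuasiConeMetric P dX) (hdY : IsQuasiConeMetric P' dY)
    (hYfb : FwdEqBwdConv P' dY)
    (f : X → Y)
    (hf : ∃ fn : ℕ+ → X → Y, (∀ n : ℕ+, ForwardCACContinuous P P' dX dY (fn n))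
      ∧ UnifFwdConv P' dY fn f) :
    ForwardCACContinuous P P' dX dY f := by
  classical
  obtain ⟨fn, hcAC, hunif⟩ := hf
  intro x x₀ hx
  obtain ⟨e', he'⟩ := hP'int
  -- countable cofinal family in the interior of P'
  set ulev : ℕ → E' := fun i => ((i:ℝ)+1)⁻¹ • e' with hulev_def
  have hlevpos : ∀ i : ℕ, ulev i ∈ interior P' := fun i =>
    interior_smul_cone hP' he' (by positivity)
  have hlevposLT : ∀ i : ℕ, coneLT P' 0 (ulev i) := fun i => by
    simpa [coneLT] using hlevpos i
  have hlevmono : ∀ i j : ℕ, i ≤ j → ulev i - ulev j ∈ P' := by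
    intro i j hij
    have heq : ulev i - ulev j = (((i:ℝ)+1)⁻¹ - ((j:ℝ)+1)⁻¹) • e' := by
      simp [hulev_def, sub_smul]
    rw [heq]
    refine cone_smul_mem hP' (interior_subset he') ?_
    have h1 : ((j:ℝ)+1)⁻¹ ≤ ((i:ℝ)+1)⁻¹ := by
      apply inv_anti₀ (by positivity)
      have : (i:ℝ) ≤ (j:ℝ) := by exact_mod_cast hij
      linarith
    linarith
  -- the auxiliary sequence w
  set w : ℕ+ → X := fun j =>
    if h : (j:ℕ) % 4 = 2 then x ⟨((j:ℕ)+2)/4, by omega⟩ else x₀ with hw_def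
  have hw : ForwardConvTo P dX w x₀ := by
    intro u hu
    obtain ⟨N, hN⟩ := hx u hu
    refine ⟨4*N, ?_⟩
    intro j hj
    have hj' : 4*(N:ℕ) ≤ (j:ℕ) := by
      have := (PNat.coe_le_coe _ _).mpr hj
      simpa using this
    by_cases h : (j:ℕ) % 4 = 2
    · have hwj : w j = x ⟨((j:ℕ)+2)/4, by omega⟩ := by simp [hw_def, h]
      rw [hwj]
      apply hN
      apply (PNat.coe_le_coe _ _).mp
      show (N:ℕ) ≤ ((j:ℕ)+2)/4
      omega
    · have hwj : w j = x₀ := by simp [hw_def, h]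
      rw [hwj, (hdX.2.1 x₀ x₀).mpr rfl]
      exact hu
  -- step B3: for each k, the sequence m ↦ fn k (x m) forward converges to fn k x₀
  have hB3 : ∀ (k : ℕ+) (i : ℕ),
      ∃ M : ℕ+, ∀ m : ℕ+, M ≤ m →
        ulev i - dY (fn k x₀) (fn k (x m)) ∈ interior P' := by
    intro k i
    obtain ⟨N, hN⟩ := hcAC k w x₀ hw (ulev i) (hlevposLT i)
    refine ⟨N, ?_⟩
    intro m hm
    have hmpos : 1 ≤ (m:ℕ) := m.2
    set om : ℕ+ := ⟨2*(m:ℕ)-1, by omega⟩ with hom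
    have hgcd : PNat.gcd (2*om) om = om := by
      apply PNat.coe_injective
      rw [PNat.gcd_coe]
      have h2 : ((2*om : ℕ+) : ℕ) = 2 * (om:ℕ) := rfl
      rw [h2, Nat.gcd_comm]
      exact Nat.gcd_eq_left ⟨2, by ring⟩
    have hNom : N ≤ PNat.gcd (2*om) om := by
      rw [hgcd, ← PNat.coe_le_coe]
      have hNm : (N:ℕ) ≤ (m:ℕ) := (PNat.coe_le_coe _ _).mpr hm
      show (N:ℕ) ≤ 2*(m:ℕ)-1
      omega
    have h1 := hN (2*om) om hNom
    rw [hgcd] at h1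
    have hw1 : w om = x₀ := by
      have : ((om:ℕ+):ℕ) % 4 ≠ 2 := by
        show (2*(m:ℕ)-1) % 4 ≠ 2
        omega
      simp [hw_def, this]
    have hw2 : w (2*om) = x m := by
      have hc : ((2*om : ℕ+) : ℕ) = 2*(2*(m:ℕ)-1) := rfl
      have hmod : ((2*om : ℕ+) : ℕ) % 4 = 2 := by rw [hc]; omega
      have hidx : (⟨(((2*om : ℕ+):ℕ)+2)/4, by omega⟩ : ℕ+) = m := by
        apply PNat.coe_injective
        show ((((2*om : ℕ+):ℕ)+2)/4) = (m:ℕ)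
        rw [hc]; omega
      simp only [hw_def, dif_pos hmod]
      rw [hidx]
    simp only [hw1, hw2] at h1
    exact h1
  choose M' hM' using hB3
  -- uniform convergence thresholds at each level
  have hU : ∀ i : ℕ, ∃ N : ℕ+, ∀ k : ℕ+, N ≤ k → ∀ z : X,
      ulev i - dY (f z) (fn k z) ∈ interior P' := by
    intro i
    obtain ⟨N, hN⟩ := hunif (ulev i) (hlevposLT i)
    exact ⟨N, fun k hk z => hN k hk z⟩
  choose N₁ hN₁ using hU
  -- diagonal sequences K and C
  obtain ⟨K, hK0, hKs⟩ : ∃ K : ℕ → ℕ+, K 0 = N₁ 0 ∧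
      ∀ i, K (i+1) = max (K i + 1) (N₁ (i+1)) :=
    ⟨fun i => Nat.rec (N₁ 0) (fun i Ki => max (Ki + 1) (N₁ (i+1))) i, rfl, fun _ => rfl⟩
  have hKmono : Monotone K := monotone_nat_of_le_succ (fun i => by
    rw [hKs]
    exact le_trans (pnat_le_add_one (K i)) (le_max_left _ _))
  have hKN : ∀ i, N₁ i ≤ K i := by
    intro i
    cases i with
    | zero => rw [hK0]
    | succ i => rw [hKs]; exact le_max_right _ _
  obtain ⟨C, hC0, hCs⟩ : ∃ C : ℕ → ℕ+, C 0 = M' (K 0) 0 ∧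
      ∀ i, C (i+1) = max (C i + 1) (M' (K (i+1)) (i+1)) :=
    ⟨fun i => Nat.rec (M' (K 0) 0) (fun i Ci => max (Ci + 1) (M' (K (i+1)) (i+1))) i,
      rfl, fun _ => rfl⟩
  have hCM : ∀ i, M' (K i) i ≤ C i := by
    intro i
    cases i with
    | zero => rw [hC0]
    | succ i => rw [hCs]; exact le_max_right _ _
  have hCmono : Monotone C := monotone_nat_of_le_succ (fun i => by
    rw [hCs]
    exact le_trans (pnat_le_add_one (C i)) (le_max_left _ _))
  have hClb : ∀ i : ℕ, i < (C i : ℕ) := by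
    intro i
    induction i with
    | zero => exact (C 0).2
    | succ i ih =>
      have h1 : C i + 1 ≤ C (i+1) := by rw [hCs]; exact le_max_left _ _
      have h2 := (PNat.coe_le_coe _ _).mpr h1
      have h3 : ((C i + 1 : ℕ+) : ℕ) = (C i : ℕ) + 1 := by push_cast; ring
      omega
  -- the level function L
  set L : ℕ+ → ℕ := fun m => Nat.findGreatest (fun i => (C i : ℕ) ≤ (m:ℕ)) (m : ℕ) with hL_def
  have hL1 : ∀ (i : ℕ) (m : ℕ+), C i ≤ m → i ≤ L m := by
    intro i m h
    have h' : (C i : ℕ) ≤ (m:ℕ) := (PNat.coe_le_coe _ _).mpr h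
    refine Nat.le_findGreatest ?_ h'
    have := hClb i
    omega
  have hL2 : ∀ (i : ℕ) (m : ℕ+), C i ≤ m → C (L m) ≤ m := by
    intro i m h
    have h' : (C i : ℕ) ≤ (m:ℕ) := (PNat.coe_le_coe _ _).mpr h
    have hi : i ≤ (m:ℕ) := by
      have := hClb i
      omega
    exact (PNat.coe_le_coe _ _).mp (Nat.findGreatest_spec (P := fun j => (C j : ℕ) ≤ (m:ℕ)) hi h')
  -- the diagonal sequence s forward converges to f x₀
  set s : ℕ+ → Y := fun m => fn (K (L m)) (x m) with hs_def
  have hsfwd : ForwardConvTo P' dY s (f x₀) := by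
    intro u hu
    obtain ⟨i, hi⟩ := exists_small_index he' (by simpa [coneLT] using hu)
    refine ⟨C i, ?_⟩
    intro m hm
    have hLi : i ≤ L m := hL1 i m hm
    have hCL : C (L m) ≤ m := hL2 i m hm
    have hKiLm : K i ≤ K (L m) := hKmono hLi
    have ha : ulev i - dY (f x₀) (fn (K (L m)) x₀) ∈ interior P' :=
      hN₁ i (K (L m)) (le_trans (hKN i) hKiLm) x₀
    have hb' : ulev (L m) - dY (fn (K (L m)) x₀) (fn (K (L m)) (x m)) ∈ interior P' :=
      hM' (K (L m)) (L m) m (le_trans (hCM (L m)) hCL)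
    have hb : ulev i - dY (fn (K (L m)) x₀) (fn (K (L m)) (x m)) ∈ interior P' :=
      cone_mono hP' (hlevmono i (L m) hLi) hb'
    have htri := hdY.2.2 (f x₀) (fn (K (L m)) (x m)) (fn (K (L m)) x₀)
    exact cone_comb hP' htri ha hb (interior_subset hi)
  -- by hYfb, s backward converges to f x₀
  have hsbwd : BackwardConvTo P' dY s (f x₀) := (hYfb s (f x₀)).mp hsfwd
  -- hence f ∘ x backward converges to f x₀
  have hfbwd : BackwardConvTo P' dY (fun m => f (x m)) (f x₀) := by
    intro u hu
    obtain ⟨i, hi⟩ := exists_small_index he' (by simpa [coneLT] using hu)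
    obtain ⟨Ns, hNs⟩ := hsbwd (ulev i) (hlevposLT i)
    refine ⟨max (C i) Ns, ?_⟩
    intro m hm
    have hmC : C i ≤ m := le_trans (le_max_left _ _) hm
    have hLi : i ≤ L m := hL1 i m hmC
    have hKiLm : K i ≤ K (L m) := hKmono hLi
    have ha : ulev i - dY (f (x m)) (fn (K (L m)) (x m)) ∈ interior P' :=
      hN₁ i (K (L m)) (le_trans (hKN i) hKiLm) (x m)
    have hb : ulev i - dY (fn (K (L m)) (x m)) (f x₀) ∈ interior P' :=
      hNs m (le_trans (le_max_right _ _) hm)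
    have htri := hdY.2.2 (f (x m)) (f x₀) (fn (K (L m)) (x m))
    exact cone_comb hP' htri ha hb (interior_subset hi)
  -- and hence also forward
  have hffwd : ForwardConvTo P' dY (fun m => f (x m)) (f x₀) :=
    (hYfb (fun m => f (x m)) (f x₀)).mpr hfbwd
  -- conclude: forward arithmetic convergence via the triangle through f x₀
  intro u' hu'
  have hu'int : u' ∈ interior P' := by simpa [coneLT] using hu'
  have hv : ((2:ℝ)⁻¹ • u') ∈ interior P' := interior_smul_cone hP' hu'int (by norm_num)
  have hvLT : coneLT P' 0 ((2:ℝ)⁻¹ • u') := by simpa [coneLT] using hv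
  obtain ⟨Nf, hNf⟩ := hffwd ((2:ℝ)⁻¹ • u') hvLT
  obtain ⟨Nb, hNb⟩ := hfbwd ((2:ℝ)⁻¹ • u') hvLT
  refine ⟨max Nf Nb, ?_⟩
  intro n m hnm
  set g : ℕ+ := PNat.gcd n m with hg
  have hgn : g ≤ n := PNat.le_of_dvd (PNat.gcd_dvd_left n m)
  have ha : (2:ℝ)⁻¹ • u' - dY (f (x g)) (f x₀) ∈ interior P' :=
    hNb g (le_trans (le_max_right _ _) hnm)
  have hb : (2:ℝ)⁻¹ • u' - dY (f x₀) (f (x n)) ∈ interior P' :=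
    hNf n (le_trans (le_trans (le_max_left _ _) hnm) hgn)
  have htri := hdY.2.2 (f (x g)) (f (x n)) (f x₀)
  have hsum : u' - ((2:ℝ)⁻¹ • u' + (2:ℝ)⁻¹ • u') ∈ P' := by
    have : u' - ((2:ℝ)⁻¹ • u' + (2:ℝ)⁻¹ • u') = 0 := by module
    rw [this]
    exact cone_zero_mem hP'
  exact cone_comb hP' htri ha hb hsum
end
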